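/- For a uniformly random injection f : Fin N → Fin m (with N ≤ m), and any index i and any function g from the restriction of f to Fin N \ {i} to Fin m, the probability that g(f restricted away from i) = f(i) is at most 1/(m − N + 1). -/
import Mathlib

section Aux

variable {N m : ℕ} (i : Fin N)

/-- values taken by `f` away from `i` -/
noncomputable def offImage (f : Fin N ↪ Fin m) : Finset (Fin m) :=
  (Finset.univ.image (fun j : {j : Fin N // j ≠ i} => f j.1))ᶜ

lemma offImage_card (h : N ≤ m) (f : Fin N ↪ Fin m) :
    (offImage i f).card = m - N + 1 := by
  have hinj : Function.Injective (fun j : {j : Fin N // j ≠ i} => f j.1) := by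
    intro a b hab
    exact Subtype.ext (f.injective hab)
  have hcard : (Finset.univ.image (fun j : {j : Fin N // j ≠ i} => f j.1)).card
      = N - 1 := by
    rw [Finset.card_image_of_injective _ hinj, Finset.card_univ,
      Fintype.card_subtype_compl]
    simp
  have hN : 1 ≤ N := i.pos
  rw [offImage, Finset.card_compl, hcard, Fintype.card_fin]
  omega

lemma key_count (N m : ℕ) (h : N ≤ m) (i : Fin N)
    (g : ({j : Fin N // j ≠ i} → Fin m) → Fin m) :
    Fintype.card {f : Fin N ↪ Fin m // g (fun j => f j.1) = f i} * (m - N + 1)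
      ≤ Fintype.card (Fin N ↪ Fin m) := by
  classical
  rw [← Fintype.card_fin (m - N + 1), ← Fintype.card_prod]
  set S := {f : Fin N ↪ Fin m // g (fun j => f j.1) = f i}
  have memv : ∀ (f : Fin N ↪ Fin m) (k : Fin (m - N + 1)),
      ((offImage i f).orderIsoOfFin (offImage_card i h f) k : Fin m) ∉
        Finset.univ.image (fun j : {j : Fin N // j ≠ i} => f j.1) := by
    intro f k
    have hv := ((offImage i f).orderIsoOfFin (offImage_card i h f) k).2
    unfold offImage at hv
    rw [Finset.mem_compl] at hv
    exact hv
  let Φ : S × Fin (m - N + 1) → (Fin N ↪ Fin m) := fun p =>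
    ⟨fun j => if j = i then
        ((offImage i p.1.1).orderIsoOfFin (offImage_card i h p.1.1) p.2 : Fin m)
      else p.1.1 j, by
      intro a b hab
      dsimp only at hab
      by_cases ha : a = i <;> by_cases hb : b = i
      · simp [ha, hb]
      · exfalso
        rw [if_pos ha, if_neg hb] at hab
        exact memv p.1.1 p.2 (by
          rw [hab]; exact Finset.mem_image_of_mem _ (Finset.mem_univ (⟨b, hb⟩ : {j : Fin N // j ≠ i})))
      · exfalso
        rw [if_pos hb, if_neg ha] at hab
        exact memv p.1.1 p.2 (by
          rw [← hab]; exact Finset.mem_image_of_mem _ (Finset.mem_univ (⟨a, ha⟩ : {j : Fin N // j ≠ i})))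
      · simp only [if_neg ha, if_neg hb] at hab
        exact p.1.1.injective hab⟩
  have hΦ : Function.Injective Φ := by
    rintro ⟨⟨f, hf⟩, k⟩ ⟨⟨f', hf'⟩, k'⟩ heq
    have heq' : ∀ j, Φ (⟨⟨f, hf⟩, k⟩) j = Φ (⟨⟨f', hf'⟩, k'⟩) j := by
      intro j; rw [heq]
    have hoff : ∀ j : Fin N, j ≠ i → f j = f' j := by
      intro j hj
      have := heq' j
      simpa [Φ, if_neg hj] using this
    have hrestr : (fun j : {j : Fin N // j ≠ i} => f j.1)
        = (fun j : {j : Fin N // j ≠ i} => f' j.1) := by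
      funext j; exact hoff j.1 j.2
    have hfi : f i = f' i := by
      rw [← hf, ← hf', hrestr]
    have hff' : f = f' := by
      apply DFunLike.ext
      intro j
      by_cases hj : j = i
      · rw [hj]; exact hfi
      · exact hoff j hj
    subst hff'
    have hi := heq' i
    simp only [Φ, Function.Embedding.coeFn_mk, if_pos rfl] at hi
    have hk : k = k' := by
      have := ((offImage i f).orderIsoOfFin (offImage_card i h f)).injective
        (Subtype.ext hi)
      exact this
    simp [hk]
  exact Fintype.card_le_of_injective Φ hΦ

end Aux

/-- For a uniformly random injection `f : Fin N ↪ Fin m` (`N ≤ m`), any strategy `g`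
that sees the values of `f` away from index `i` guesses `f i` with probability at
most `1 / (m − N + 1)`. -/
theorem guess_missing_code_bound (N m : ℕ) (h : N ≤ m) (i : Fin N)
    (g : ({j : Fin N // j ≠ i} → Fin m) → Fin m) :
    haveI : Nonempty (Fin N ↪ Fin m) := ⟨Fin.castLEEmb h⟩
    (PMF.uniformOfFintype (Fin N ↪ Fin m)).toOuterMeasure
        {f | g (fun j => f j.1) = f i} ≤ (((m - N + 1 : ℕ) : ENNReal))⁻¹ := by
  classical
  haveI : Nonempty (Fin N ↪ Fin m) := ⟨Fin.castLEEmb h⟩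
  set T := Fintype.card (Fin N ↪ Fin m) with hT
  set s : Set (Fin N ↪ Fin m) := {f | g (fun j => f j.1) = f i}
  have happ : (PMF.uniformOfFintype (Fin N ↪ Fin m)).toOuterMeasure s
      = (Fintype.card {f : Fin N ↪ Fin m // g (fun j => f j.1) = f i} : ENNReal)
        * (T : ENNReal)⁻¹ := by
    rw [PMF.toOuterMeasure_apply]
    rw [tsum_eq_sum (s := Finset.univ) (by simp)]
    rw [Finset.sum_indicator_eq_sum_filter]
    simp only [PMF.uniformOfFintype_apply]
    rw [Finset.sum_const, nsmul_eq_mul]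
    congr 1
    rw [Fintype.card_subtype]
    norm_cast
  rw [happ]
  have hkey := key_count N m h i g
  have hT0 : (T : ENNReal) ≠ 0 := by
    have : 0 < T := Fintype.card_pos
    exact_mod_cast this.ne'
  have hTtop : (T : ENNReal) ≠ ⊤ := ENNReal.natCast_ne_top T
  rw [ENNReal.le_inv_iff_mul_le]
  calc (Fintype.card {f : Fin N ↪ Fin m // g (fun j => f j.1) = f i} : ENNReal)
        * (T : ENNReal)⁻¹ * ((m - N + 1 : ℕ) : ENNReal)
      = ((Fintype.card {f : Fin N ↪ Fin m // g (fun j => f j.1) = f i}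
          * (m - N + 1) : ℕ) : ENNReal) * (T : ENNReal)⁻¹ := by
        push_cast; ring
    _ ≤ (T : ENNReal) * (T : ENNReal)⁻¹ := by
        exact mul_le_mul_left (by exact_mod_cast hkey) _
    _ ≤ 1 := ENNReal.mul_inv_le_one _
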